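/- arXiv:math/0206256 — 2 statements merged into one kernel-verified Lean document; each statement's English description precedes it below -/
import Mathlib

section
/- Let V be a finite-dimensional k-vector space and g a linear automorphism of V of finite order invertible in k with V^g = 0. Then the Koszul complex of the section s'(v) = v − g⁻¹(v) of the trivial bundle with fiber V over the affine space V is a resolution of the one-dimensional module k (supported at the origin); i.e., its homology is k in degree 0 and vanishes in positive degrees. -/
open MvPolynomial

variable (k : Type*) [Field k] (n : ℕ)

/-- The coordinate ring `k[V]` of the affine space `V = k^n`. -/
abbrev KRing' := MvPolynomial (Fin n) k

/-- The `i`-th component of the section `s'(v) = v − g⁻¹(v)` of the trivial bundle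
with fiber `V` over `V`, as a (linear) polynomial on `V`. -/
noncomputable def sectionPoly (g : (Fin n → k) ≃ₗ[k] (Fin n → k)) (i : Fin n) : KRing' k n :=
  X i - ∑ j : Fin n,
    C (LinearMap.toMatrix (Pi.basisFun k (Fin n)) (Pi.basisFun k (Fin n))
        (g.symm : (Fin n → k) →ₗ[k] (Fin n → k)) i j) * X j

/-- The degree-`j` term `k[V] ⊗ Λ^j V*` of the Koszul complex, modelled on the
standard basis of `Λ^j V*`. -/
abbrev KTerm' (j : ℕ) := {S : Finset (Fin n) // S.card = j} →₀ KRing' k n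

/-- The Koszul differential: contraction with the section `s'(v) = v − g⁻¹(v)`. -/
noncomputable def koszulD' (g : (Fin n → k) ≃ₗ[k] (Fin n → k)) (j : ℕ)
    (x : KTerm' k n (j + 1)) : KTerm' k n j :=
  x.sum fun S r =>
    ∑ i ∈ S.val.attach,
      ((-1 : KRing' k n) ^ ((S.val.filter (fun a => a < i.val)).card)) •
        Finsupp.single
          ⟨S.val.erase i.val, by simp [Finset.card_erase_of_mem i.2, S.2]⟩
          (r * sectionPoly k n g i.val)

/-- The augmentation: evaluation at the origin, with values in the
one-dimensional module `k` supported at the origin. -/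
noncomputable def koszulAug' (x : KTerm' k n 0) : k :=
  eval (0 : Fin n → k) (x ⟨∅, Finset.card_empty⟩)

/-! ### Auxiliary development -/

/-- generalized Koszul differential, contraction with an arbitrary family `t`. -/
noncomputable def kD (t : Fin n → KRing' k n) (j : ℕ)
    (x : KTerm' k n (j + 1)) : KTerm' k n j :=
  x.sum fun S r =>
    ∑ i ∈ S.val.attach,
      ((-1 : KRing' k n) ^ ((S.val.filter (fun a => a < i.val)).card)) •
        Finsupp.single
          ⟨S.val.erase i.val, by simp [Finset.card_erase_of_mem i.2, S.2]⟩
          (r * t i.val)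

lemma koszulD'_eq_kD (g : (Fin n → k) ≃ₗ[k] (Fin n → k)) (j : ℕ) :
    koszulD' k n g j = kD k n (sectionPoly k n g) j := rfl

/-- a single term of the differential, as a total function. -/
noncomputable def dT (t : Fin n → KRing' k n) {j : ℕ} (S : Finset (Fin n))
    (hS : S.card = j + 1) (r : KRing' k n) (i : Fin n) : KTerm' k n j :=
  if hi : i ∈ S then
    Finsupp.single ⟨S.erase i, by simp [Finset.card_erase_of_mem hi, hS]⟩
      (C ((-1 : k) ^ ((S.filter (fun a => a < i)).card)) * (r * t i))
  else 0

lemma kD_single (t : Fin n → KRing' k n) {j : ℕ} (S : Finset (Fin n))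
    (hS : S.card = j + 1) (r : KRing' k n) :
    kD k n t j (Finsupp.single ⟨S, hS⟩ r) = ∑ i ∈ S, dT k n t S hS r i := by
  rw [kD, Finsupp.sum_single_index (by simp)]
  rw [← Finset.sum_attach S (dT k n t S hS r)]
  refine Finset.sum_congr rfl fun i _ => ?_
  rw [dT, dif_pos i.2, Finsupp.smul_single']
  have : ((-1 : KRing' k n)) ^ ((S.filter (fun a => a < i.val)).card)
      = C ((-1 : k) ^ ((S.filter (fun a => a < i.val)).card)) := by
    simp [map_pow]
  rw [this]

lemma kD_add (t : Fin n → KRing' k n) (j : ℕ) (x y : KTerm' k n (j + 1)) :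
    kD k n t j (x + y) = kD k n t j x + kD k n t j y := by
  refine Finsupp.sum_add_index' (fun S => by simp) (fun S r₁ r₂ => ?_)
  simp [add_mul, Finsupp.single_add, smul_add, Finset.sum_add_distrib]

lemma kD_zero (t : Fin n → KRing' k n) (j : ℕ) : kD k n t j 0 = 0 :=
  Finsupp.sum_zero_index

noncomputable def kDh (t : Fin n → KRing' k n) (j : ℕ) :
    KTerm' k n (j + 1) →+ KTerm' k n j :=
  AddMonoidHom.mk' (kD k n t j) (kD_add k n t j)

/-- the contracting homotopy on a single monomial. -/
noncomputable def hM {j : ℕ} (S : Finset (Fin n)) (hS : S.card = j)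
    (α : Fin n →₀ ℕ) (c : k) : KTerm' k n (j + 1) :=
  if hT : (α.support ∪ S).Nonempty then
    if hi : (α.support ∪ S).min' hT ∈ S then 0
    else Finsupp.single
      ⟨insert ((α.support ∪ S).min' hT) S,
        by rw [Finset.card_insert_of_notMem hi, hS]⟩
      (monomial (α - Finsupp.single ((α.support ∪ S).min' hT) 1) c)
  else 0

lemma hM_zero {j : ℕ} (S : Finset (Fin n)) (hS : S.card = j) (α : Fin n →₀ ℕ) :
    hM k n S hS α 0 = 0 := by
  unfold hM; split_ifs <;> simp

lemma hM_add {j : ℕ} (S : Finset (Fin n)) (hS : S.card = j) (α : Fin n →₀ ℕ)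
    (c₁ c₂ : k) : hM k n S hS α (c₁ + c₂) = hM k n S hS α c₁ + hM k n S hS α c₂ := by
  unfold hM; split_ifs <;> simp [map_add, Finsupp.single_add]

noncomputable def kH (j : ℕ) (x : KTerm' k n j) : KTerm' k n (j + 1) :=
  x.sum fun S r => (AddMonoidAlgebra.coeff r).sum fun α c => hM k n S.1 S.2 α c

lemma kH_zero (j : ℕ) : kH k n j 0 = 0 := Finsupp.sum_zero_index

lemma kH_add (j : ℕ) (x y : KTerm' k n j) :
    kH k n j (x + y) = kH k n j x + kH k n j y := by
  refine Finsupp.sum_add_index' (fun S => Finsupp.sum_zero_index) (fun S r₁ r₂ => ?_)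
  exact Finsupp.sum_add_index' (fun α => hM_zero k n S.1 S.2 α)
    (fun α c₁ c₂ => hM_add k n S.1 S.2 α c₁ c₂)

noncomputable def kHh (j : ℕ) : KTerm' k n j →+ KTerm' k n (j + 1) :=
  AddMonoidHom.mk' (kH k n j) (kH_add k n j)

lemma kH_single_monomial {j : ℕ} (S : Finset (Fin n)) (hS : S.card = j)
    (α : Fin n →₀ ℕ) (c : k) :
    kH k n j (Finsupp.single ⟨S, hS⟩ (monomial α c)) = hM k n S hS α c := by
  rw [kH, Finsupp.sum_single_index]
  · rw [← single_eq_monomial, AddMonoidAlgebra.coeff_single, Finsupp.sum_single_index]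
    exact hM_zero k n S hS α
  · exact Finsupp.sum_zero_index

/-! ### utility lemmas -/

lemma min'_congr {γ : Type*} [LinearOrder γ] {s t : Finset γ} (h : s = t)
    (hs : s.Nonempty) : s.min' hs = t.min' (h ▸ hs) := by subst h; rfl

lemma support_union_erase {α : Fin n →₀ ℕ} {S : Finset (Fin n)} {i : Fin n}
    (hi : i ∈ S) :
    (α + Finsupp.single i 1).support ∪ S.erase i = α.support ∪ S := by
  ext a
  by_cases h : a = i
  · subst h
    simp [Finsupp.mem_support_iff, Finsupp.add_apply, Finsupp.single_eq_same, hi]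
  · simp [Finsupp.mem_support_iff, Finsupp.add_apply, Finset.mem_erase, h,
      Finsupp.single_apply, Ne.symm h]

lemma sub_add_cancel_single {α : Fin n →₀ ℕ} {i : Fin n} (h : α i ≠ 0) :
    α - Finsupp.single i 1 + Finsupp.single i 1 = α := by
  ext a
  simp only [Finsupp.add_apply, Finsupp.tsub_apply, Finsupp.single_apply]
  rcases eq_or_ne i a with rfl | h1
  · simp only [if_pos rfl, if_true]; omega
  · simp [h1]

lemma sub_add_comm_single {α : Fin n →₀ ℕ} {i0 i : Fin n} (h : α i0 ≠ 0) :
    α - Finsupp.single i0 1 + Finsupp.single i 1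
      = α + Finsupp.single i 1 - Finsupp.single i0 1 := by
  ext a
  simp only [Finsupp.add_apply, Finsupp.tsub_apply, Finsupp.single_apply]
  rcases eq_or_ne i0 a with rfl | h0
  · rcases eq_or_ne i i0 with rfl | h1
    · simp only [if_pos rfl, if_true]; omega
    · simp only [if_neg h1, if_pos rfl, if_true]; omega
  · rcases eq_or_ne i a with rfl | h1
    · simp only [if_pos rfl, if_true, if_neg h0]; omega
    · simp only [if_neg h0, if_neg h1]; omega

noncomputable def Xf : Fin n → KRing' k n := fun i => X i

lemma hM_congr_zero {j : ℕ} {S' : Finset (Fin n)} (hS' : S'.card = j)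
    {α' : Fin n →₀ ℕ} {c' : k} {T : Finset (Fin n)}
    (hU : α'.support ∪ S' = T) (hTne : T.Nonempty)
    (hmem : T.min' hTne ∈ S') : hM k n S' hS' α' c' = 0 := by
  subst hU
  rw [hM, dif_pos hTne, dif_pos hmem]

lemma hM_congr_single {j : ℕ} {S' : Finset (Fin n)} (hS' : S'.card = j)
    {α' : Fin n →₀ ℕ} {c' : k} {T : Finset (Fin n)}
    (hU : α'.support ∪ S' = T) (hTne : T.Nonempty)
    {m : Fin n} (hm : T.min' hTne = m) (hnm : m ∉ S') :
    hM k n S' hS' α' c' = Finsupp.single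
      ⟨insert m S', by rw [Finset.card_insert_of_notMem hnm, hS']⟩
      (monomial (α' - Finsupp.single m 1) c') := by
  subst hU hm
  rw [hM, dif_pos hTne, dif_neg hnm]

lemma kH_dT_X {j : ℕ} (S : Finset (Fin n)) (hS : S.card = j + 1)
    (α : Fin n →₀ ℕ) (c : k) (i : Fin n) (hi : i ∈ S) :
    kH k n j (dT k n (Xf k n) S hS (monomial α c) i)
      = hM k n (S.erase i) (by simp [Finset.card_erase_of_mem hi, hS])
          (α + Finsupp.single i 1)
          ((-1 : k) ^ ((S.filter (fun a => a < i)).card) * c) := by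
  rw [dT, dif_pos hi]
  rw [show (Xf k n i) = monomial (Finsupp.single i 1) (1 : k) from rfl]
  rw [monomial_mul, mul_one, C_mul_monomial]
  exact kH_single_monomial k n _ _ _ _

lemma kH_finset_sum (j : ℕ) {ι : Type*} (s : Finset ι) (f : ι → KTerm' k n j) :
    kH k n j (∑ i ∈ s, f i) = ∑ i ∈ s, kH k n j (f i) :=
  map_sum (kHh k n j) f s

/-! ### the homotopy identity in positive degrees, single monomial case -/

lemma homotopy_pos_single (j : ℕ) (S : Finset (Fin n)) (hS : S.card = j + 1)
    (α : Fin n →₀ ℕ) (c : k) :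
    kD k n (Xf k n) (j + 1) (kH k n (j + 1) (Finsupp.single ⟨S, hS⟩ (monomial α c)))
      + kH k n j (kD k n (Xf k n) j (Finsupp.single ⟨S, hS⟩ (monomial α c)))
      = Finsupp.single ⟨S, hS⟩ (monomial α c) := by
  have hSne : S.Nonempty := Finset.card_pos.mp (by rw [hS]; omega)
  have hT : (α.support ∪ S).Nonempty := by
    obtain ⟨a, ha⟩ := hSne; exact ⟨a, Finset.mem_union_right _ ha⟩
  set i0 := (α.support ∪ S).min' hT with hi0def
  have hi0T : i0 ∈ α.support ∪ S := Finset.min'_mem _ hT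
  have hle : ∀ a ∈ S, i0 ≤ a := fun a ha =>
    Finset.min'_le _ a (Finset.mem_union_right _ ha)
  rw [kH_single_monomial, kD_single, kH_finset_sum]
  by_cases hi0S : i0 ∈ S
  · -- Case A : the minimum is an exterior index
    rw [hM_congr_zero k n hS rfl hT hi0S, kD_zero, zero_add]
    rw [Finset.sum_eq_single_of_mem i0 hi0S ?other]
    · rw [kH_dT_X k n S hS α c i0 hi0S]
      rw [hM_congr_single k n _ (support_union_erase n hi0S) hT hi0def.symm
        (Finset.notMem_erase i0 S)]
      have hfil : S.filter (fun a => a < i0) = ∅ :=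
        Finset.filter_false_of_mem (fun a ha => not_lt.mpr (hle a ha))
      have hidx : (⟨insert i0 (S.erase i0), by
          rw [Finset.card_insert_of_notMem (Finset.notMem_erase i0 S),
            Finset.card_erase_of_mem hi0S, hS]; omega⟩ :
          {S : Finset (Fin n) // S.card = j + 1}) = ⟨S, hS⟩ :=
        Subtype.ext (Finset.insert_erase hi0S)
      rw [hfil]
      simp only [Finset.card_empty, pow_zero, one_mul, add_tsub_cancel_right]
      exact congrArg₂ _ hidx rfl
    · intro i hiS hne
      rw [kH_dT_X k n S hS α c i hiS]
      exact hM_congr_zero k n _ (support_union_erase n hiS) hT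
        (Finset.mem_erase.mpr ⟨Ne.symm hne, hi0S⟩)
  · -- Case B : the minimum is a polynomial index
    have hi0A : i0 ∈ α.support := by
      rcases Finset.mem_union.mp hi0T with h | h
      · exact h
      · exact absurd h hi0S
    have hα : α i0 ≠ 0 := Finsupp.mem_support_iff.mp hi0A
    rw [hM_congr_single k n hS rfl hT hi0def.symm hi0S, kD_single,
      Finset.sum_insert hi0S]
    have hfil : (insert i0 S).filter (fun a => a < i0) = ∅ :=
      Finset.filter_false_of_mem (fun a ha => by
        rcases Finset.mem_insert.mp ha with h | h
        · rw [h]; exact lt_irrefl i0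
        · exact not_lt.mpr (hle a h))
    have ht0 : dT k n (Xf k n) (insert i0 S)
        (by rw [Finset.card_insert_of_notMem hi0S, hS])
        (monomial (α - Finsupp.single i0 1) c) i0
        = Finsupp.single ⟨S, hS⟩ (monomial α c) := by
      rw [dT, dif_pos (Finset.mem_insert_self i0 S)]
      rw [show (Xf k n i0) = monomial (Finsupp.single i0 1) (1 : k) from rfl]
      rw [monomial_mul, mul_one, C_mul_monomial, hfil]
      simp only [Finset.card_empty, pow_zero, one_mul]
      rw [sub_add_cancel_single n hα]
      exact congrArg₂ _ (Subtype.ext (Finset.erase_insert hi0S)) rfl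
    rw [ht0, add_assoc, ← Finset.sum_add_distrib]
    have hzero : ∀ i ∈ S,
        dT k n (Xf k n) (insert i0 S)
          (by rw [Finset.card_insert_of_notMem hi0S, hS])
          (monomial (α - Finsupp.single i0 1) c) i
        + kH k n j (dT k n (Xf k n) S hS (monomial α c) i) = 0 := by
      intro i hiS
      have hi0i : i0 < i := lt_of_le_of_ne (hle i hiS) (fun h => hi0S (h ▸ hiS))
      rw [kH_dT_X k n S hS α c i hiS]
      rw [hM_congr_single k n _ (support_union_erase n hiS) hT hi0def.symm
        (fun hmem => hi0S (Finset.mem_of_mem_erase hmem))]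
      rw [dT, dif_pos (Finset.mem_insert_of_mem hiS)]
      rw [show (Xf k n i) = monomial (Finsupp.single i 1) (1 : k) from rfl]
      rw [monomial_mul, mul_one, C_mul_monomial]
      have hfil2 : (insert i0 S).filter (fun a => a < i)
          = insert i0 (S.filter (fun a => a < i)) := by
        rw [Finset.filter_insert, if_pos hi0i]
      have hcard : ((insert i0 S).filter (fun a => a < i)).card
          = (S.filter (fun a => a < i)).card + 1 := by
        rw [hfil2, Finset.card_insert_of_notMem
          (fun hmem => hi0S (Finset.mem_of_mem_filter i0 hmem))]
      have hidx : (⟨(insert i0 S).erase i, by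
          rw [Finset.card_erase_of_mem (Finset.mem_insert_of_mem hiS),
            Finset.card_insert_of_notMem hi0S, hS]; omega⟩ :
          {S : Finset (Fin n) // S.card = j + 1}) = (⟨insert i0 (S.erase i), by
          rw [Finset.card_insert_of_notMem
              (fun hmem => hi0S (Finset.mem_of_mem_erase hmem)),
            Finset.card_erase_of_mem hiS, hS]; omega⟩ :
          {S : Finset (Fin n) // S.card = j + 1}) :=
        Subtype.ext (Finset.erase_insert_of_ne (Ne.symm (ne_of_gt hi0i)))
      rw [hidx, hcard, sub_add_comm_single n hα, ← Finsupp.single_add,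
        ← map_add]
      have hc : (-1 : k) ^ ((S.filter (fun a => a < i)).card + 1) * c
          + (-1 : k) ^ ((S.filter (fun a => a < i)).card) * c = 0 := by
        rw [pow_succ]; ring
      rw [hc, monomial_zero, Finsupp.single_zero]
    rw [Finset.sum_congr rfl hzero, Finset.sum_const_zero, add_zero]

lemma homotopy_pos_single' (j : ℕ) (p : {S : Finset (Fin n) // S.card = j + 1})
    (r : KRing' k n) :
    kD k n (Xf k n) (j + 1) (kH k n (j + 1) (Finsupp.single p r))
      + kH k n j (kD k n (Xf k n) j (Finsupp.single p r))
      = Finsupp.single p r := by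
  obtain ⟨S, hS⟩ := p
  induction r using MvPolynomial.induction_on' with
  | monomial α c => exact homotopy_pos_single k n j S hS α c
  | add p q hp hq =>
    rw [Finsupp.single_add, kH_add, kD_add, kD_add, kH_add, add_add_add_comm,
      hp, hq]

lemma homotopy_pos (j : ℕ) (x : KTerm' k n (j + 1)) :
    kD k n (Xf k n) (j + 1) (kH k n (j + 1) x)
      + kH k n j (kD k n (Xf k n) j x) = x := by
  induction x using Finsupp.induction with
  | zero => rw [kH_zero, kD_zero, kD_zero, kH_zero, add_zero]
  | single_add p r f hp hr ih =>
    rw [kH_add, kD_add, kD_add, kH_add, add_add_add_comm,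
      homotopy_pos_single', ih]

lemma aug_add (x y : KTerm' k n 0) :
    koszulAug' k n (x + y) = koszulAug' k n x + koszulAug' k n y := by
  rw [koszulAug', koszulAug', koszulAug', Finsupp.add_apply, map_add]

lemma homotopy_zero_single (α : Fin n →₀ ℕ) (c : k) :
    kD k n (Xf k n) 0 (kH k n 0
        (Finsupp.single ⟨∅, Finset.card_empty⟩ (monomial α c)))
      + Finsupp.single ⟨∅, Finset.card_empty⟩
          (C (koszulAug' k n
            (Finsupp.single ⟨∅, Finset.card_empty⟩ (monomial α c))))
      = Finsupp.single ⟨∅, Finset.card_empty⟩ (monomial α c) := by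
  have haug : koszulAug' k n
      (Finsupp.single ⟨∅, Finset.card_empty⟩ (monomial α c))
      = eval (0 : Fin n → k) (monomial α c) := by
    rw [koszulAug', Finsupp.single_eq_same]
  rw [kH_single_monomial]
  by_cases hα : α = 0
  · subst hα
    have h0 : hM k n ∅ Finset.card_empty 0 c = 0 := by
      rw [hM, dif_neg]; simp
    rw [h0, kD_zero, zero_add, haug]
    have he : eval (0 : Fin n → k) (monomial (0 : Fin n →₀ ℕ) c) = c := by
      simp [eval_monomial]
    rw [he, C_apply]
  · have hTne : (α.support ∪ (∅ : Finset (Fin n))).Nonempty := by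
      rw [Finset.union_empty]; exact Finsupp.support_nonempty_iff.mpr hα
    set i0 := (α.support ∪ (∅ : Finset (Fin n))).min' hTne with hi0def
    have hi0 : i0 ∈ α.support := by
      have h : i0 ∈ α.support ∪ (∅ : Finset (Fin n)) := Finset.min'_mem _ hTne
      rwa [Finset.union_empty] at h
    have hαi0 : α i0 ≠ 0 := Finsupp.mem_support_iff.mp hi0
    rw [hM_congr_single k n Finset.card_empty rfl hTne hi0def.symm
      (Finset.notMem_empty _)]
    rw [kD_single, Finset.sum_insert (Finset.notMem_empty i0),
      Finset.sum_empty, add_zero]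
    rw [dT, dif_pos (Finset.mem_insert_self i0 ∅)]
    rw [show (Xf k n i0) = monomial (Finsupp.single i0 1) (1 : k) from rfl]
    have hfil : (insert i0 (∅ : Finset (Fin n))).filter (fun a => a < i0) = ∅ :=
      Finset.filter_false_of_mem (fun a ha => by
        rcases Finset.mem_insert.mp ha with h | h
        · rw [h]; exact lt_irrefl i0
        · exact absurd h (Finset.notMem_empty a))
    rw [monomial_mul, mul_one, C_mul_monomial, hfil]
    simp only [Finset.card_empty, pow_zero, one_mul]
    rw [sub_add_cancel_single n hαi0]
    have hzero : eval (0 : Fin n → k) (monomial α c) = 0 := by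
      rw [eval_monomial]
      have h2 : (α.prod fun a e => (0 : Fin n → k) a ^ e) = 0 := by
        rw [Finsupp.prod]
        exact Finset.prod_eq_zero hi0 (by simp [zero_pow hαi0])
      rw [h2, mul_zero]
    rw [haug, hzero, map_zero, Finsupp.single_zero, add_zero]
    exact congrArg₂ _ (Subtype.ext (Finset.erase_insert (Finset.notMem_empty i0))) rfl

lemma homotopy_zero_single' (p : {S : Finset (Fin n) // S.card = 0})
    (r : KRing' k n) :
    kD k n (Xf k n) 0 (kH k n 0 (Finsupp.single p r))
      + Finsupp.single ⟨∅, Finset.card_empty⟩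
          (C (koszulAug' k n (Finsupp.single p r)))
      = Finsupp.single p r := by
  obtain ⟨S, hS⟩ := p
  have hSe : S = ∅ := Finset.card_eq_zero.mp hS
  subst hSe
  induction r using MvPolynomial.induction_on' with
  | monomial α c => exact homotopy_zero_single k n α c
  | add p q hp hq =>
    rw [Finsupp.single_add, kH_add, kD_add, aug_add, map_add,
      Finsupp.single_add, add_add_add_comm, hp, hq]

lemma homotopy_zero (x : KTerm' k n 0) :
    kD k n (Xf k n) 0 (kH k n 0 x)
      + Finsupp.single ⟨∅, Finset.card_empty⟩ (C (koszulAug' k n x))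
      = x := by
  induction x using Finsupp.induction with
  | zero =>
    rw [kH_zero, kD_zero, zero_add]
    have : koszulAug' k n 0 = 0 := by rw [koszulAug']; simp
    rw [this, map_zero, Finsupp.single_zero]
  | single_add p r f hp hr ih =>
    rw [kH_add, kD_add, aug_add, map_add, Finsupp.single_add,
      add_add_add_comm, homotopy_zero_single', ih]

/-! ### d ∘ d = 0 -/

lemma kD_finset_sum (t : Fin n → KRing' k n) (j : ℕ) {ι : Type*} (s : Finset ι)
    (f : ι → KTerm' k n (j + 1)) :
    kD k n t j (∑ i ∈ s, f i) = ∑ i ∈ s, kD k n t j (f i) :=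
  map_sum (kDh k n t j) f s

lemma sign_cancel_lt {S : Finset (Fin n)} {i i' : Fin n} (hi' : i' ∈ S)
    (hlt : i' < i) :
    ((-1 : k) ^ (((S.erase i).filter (fun a => a < i')).card))
        * (-1 : k) ^ ((S.filter (fun a => a < i)).card)
      + ((-1 : k) ^ (((S.erase i').filter (fun a => a < i)).card))
        * (-1 : k) ^ ((S.filter (fun a => a < i')).card) = 0 := by
  have h1 : (S.erase i).filter (fun a => a < i') = S.filter (fun a => a < i') := by
    rw [Finset.filter_erase, Finset.erase_eq_of_notMem]
    intro hmem
    exact absurd (Finset.mem_filter.mp hmem).2 (not_lt.mpr hlt.le)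
  have h2 : (S.erase i').filter (fun a => a < i)
      = (S.filter (fun a => a < i)).erase i' := by rw [Finset.filter_erase]
  have hmem : i' ∈ S.filter (fun a => a < i) := Finset.mem_filter.mpr ⟨hi', hlt⟩
  obtain ⟨m, hm⟩ : ∃ m, (S.filter (fun a => a < i)).card = m + 1 :=
    ⟨(S.filter (fun a => a < i)).card - 1,
      (Nat.succ_pred_eq_of_pos (Finset.card_pos.mpr ⟨i', hmem⟩)).symm⟩
  rw [h1, h2, Finset.card_erase_of_mem hmem, hm, Nat.add_sub_cancel, pow_succ]
  ring

lemma sign_cancel {S : Finset (Fin n)} {i i' : Fin n} (hi : i ∈ S)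
    (hi' : i' ∈ S) (hne : i' ≠ i) :
    ((-1 : k) ^ (((S.erase i).filter (fun a => a < i')).card))
        * (-1 : k) ^ ((S.filter (fun a => a < i)).card)
      + ((-1 : k) ^ (((S.erase i').filter (fun a => a < i)).card))
        * (-1 : k) ^ ((S.filter (fun a => a < i')).card) = 0 := by
  rcases lt_or_gt_of_ne hne with h | h
  · exact sign_cancel_lt k n hi' h
  · rw [add_comm]; exact sign_cancel_lt k n hi h

lemma erase_erase_comm {S : Finset (Fin n)} (a b : Fin n) :
    (S.erase a).erase b = (S.erase b).erase a := by
  ext x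
  simp only [Finset.mem_erase]
  tauto

lemma kD_kD_single (t : Fin n → KRing' k n) (j : ℕ) (S : Finset (Fin n))
    (hS : S.card = j + 1 + 1) (r : KRing' k n) :
    kD k n t j (kD k n t (j + 1) (Finsupp.single ⟨S, hS⟩ r)) = 0 := by
  rw [kD_single, kD_finset_sum]
  have key : ∀ i ∈ S, kD k n t j (dT k n t S hS r i)
      = ∑ i' ∈ S.erase i,
          (if h : i ∈ S then
            dT k n t (S.erase i) (by simp [Finset.card_erase_of_mem h, hS])
              (C ((-1 : k) ^ ((S.filter (fun a => a < i)).card)) * (r * t i)) i'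
          else 0) := by
    intro i hi
    rw [dT, dif_pos hi, kD_single]
    exact Finset.sum_congr rfl fun i' _ => by rw [dif_pos hi]
  rw [Finset.sum_congr rfl key, Finset.sum_sigma']
  refine Finset.sum_involution (fun p _ => ⟨p.2, p.1⟩) ?_ ?_ ?_ ?_
  · -- cancellation
    intro p hp
    obtain ⟨hp1, hp2⟩ := Finset.mem_sigma.mp hp
    have hp2S : p.2 ∈ S := Finset.mem_of_mem_erase hp2
    have hne : p.2 ≠ p.1 := (Finset.mem_erase.mp hp2).1
    rw [dif_pos hp1, dif_pos hp2S]
    rw [dT, dif_pos hp2, dT, dif_pos (Finset.mem_erase.mpr ⟨hne.symm, hp1⟩)]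
    have hidx : (⟨(S.erase p.1).erase p.2, by
        simp [Finset.card_erase_of_mem hp2,
          Finset.card_erase_of_mem hp1, hS]⟩ :
        {T : Finset (Fin n) // T.card = j}) = ⟨(S.erase p.2).erase p.1, by
        simp [Finset.card_erase_of_mem (Finset.mem_erase.mpr ⟨hne.symm, hp1⟩),
          Finset.card_erase_of_mem hp2S, hS]⟩ :=
      Subtype.ext (erase_erase_comm n p.1 p.2)
    rw [hidx, ← Finsupp.single_add]
    have hq : C ((-1 : k) ^ (((S.erase p.1).filter (fun a => a < p.2)).card))
          * (C ((-1 : k) ^ ((S.filter (fun a => a < p.1)).card)) * (r * t p.1) * t p.2)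
        + C ((-1 : k) ^ (((S.erase p.2).filter (fun a => a < p.1)).card))
          * (C ((-1 : k) ^ ((S.filter (fun a => a < p.2)).card)) * (r * t p.2) * t p.1)
        = C (((-1 : k) ^ (((S.erase p.1).filter (fun a => a < p.2)).card))
              * (-1 : k) ^ ((S.filter (fun a => a < p.1)).card)
            + ((-1 : k) ^ (((S.erase p.2).filter (fun a => a < p.1)).card))
              * (-1 : k) ^ ((S.filter (fun a => a < p.2)).card))
            * (r * t p.1 * t p.2) := by
      rw [map_add, map_mul, map_mul]
      ring
    rw [hq, sign_cancel k n hp1 hp2S hne, map_zero, zero_mul,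
      Finsupp.single_zero]
  · -- nonzero implies not fixed
    intro p hp _
    obtain ⟨_, hp2⟩ := Finset.mem_sigma.mp hp
    have hne : p.2 ≠ p.1 := (Finset.mem_erase.mp hp2).1
    intro h
    exact hne (congrArg Sigma.fst h)
  · -- swap stays in the set
    intro p hp
    obtain ⟨hp1, hp2⟩ := Finset.mem_sigma.mp hp
    exact Finset.mem_sigma.mpr ⟨Finset.mem_of_mem_erase hp2,
      Finset.mem_erase.mpr ⟨(Finset.mem_erase.mp hp2).1.symm, hp1⟩⟩
  · -- involution
    intro p hp
    rfl

lemma kD_kD (t : Fin n → KRing' k n) (j : ℕ) (x : KTerm' k n (j + 1 + 1)) :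
    kD k n t j (kD k n t (j + 1) x) = 0 := by
  induction x using Finsupp.induction with
  | zero => rw [kD_zero, kD_zero]
  | single_add p r f hp hr ih =>
    rw [kD_add, kD_add, ih, add_zero]
    obtain ⟨S, hS⟩ := p
    exact kD_kD_single k n t j S hS r

/-! ### transport along an algebra homomorphism -/

noncomputable def Ψm (ψ : KRing' k n →ₐ[k] KRing' k n) (j : ℕ)
    (x : KTerm' k n j) : KTerm' k n j :=
  Finsupp.mapRange ψ (map_zero ψ) x

lemma Ψm_add (ψ : KRing' k n →ₐ[k] KRing' k n) (j : ℕ) (x y : KTerm' k n j) :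
    Ψm k n ψ j (x + y) = Ψm k n ψ j x + Ψm k n ψ j y :=
  Finsupp.mapRange_add (map_add ψ) x y

lemma Ψm_zero (ψ : KRing' k n →ₐ[k] KRing' k n) (j : ℕ) : Ψm k n ψ j 0 = 0 :=
  Finsupp.mapRange_zero

lemma Ψm_single (ψ : KRing' k n →ₐ[k] KRing' k n) (j : ℕ)
    (p : {S : Finset (Fin n) // S.card = j}) (r : KRing' k n) :
    Ψm k n ψ j (Finsupp.single p r) = Finsupp.single p (ψ r) :=
  Finsupp.mapRange_single

noncomputable def Ψmh (ψ : KRing' k n →ₐ[k] KRing' k n) (j : ℕ) :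
    KTerm' k n j →+ KTerm' k n j :=
  AddMonoidHom.mk' (Ψm k n ψ j) (Ψm_add k n ψ j)

lemma algHom_C' (ψ : KRing' k n →ₐ[k] KRing' k n) (a : k) : ψ (C a) = C a := by
  rw [← MvPolynomial.algebraMap_eq]
  exact ψ.commutes a

lemma Ψm_kD (ψ : KRing' k n →ₐ[k] KRing' k n) (t : Fin n → KRing' k n) (j : ℕ)
    (x : KTerm' k n (j + 1)) :
    Ψm k n ψ j (kD k n t j x)
      = kD k n (fun i => ψ (t i)) j (Ψm k n ψ (j + 1) x) := by
  induction x using Finsupp.induction with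
  | zero => rw [kD_zero, Ψm_zero, Ψm_zero, kD_zero]
  | single_add p r f hp hr ih =>
    rw [kD_add, Ψm_add, Ψm_add, kD_add, ih]
    obtain ⟨S, hS⟩ := p
    rw [add_left_inj]
    rw [Ψm_single, kD_single, kD_single,
      show Ψm k n ψ j = ⇑(Ψmh k n ψ j) from rfl, map_sum]
    refine Finset.sum_congr rfl fun i _ => ?_
    show Ψm k n ψ j _ = _
    rw [dT, dT]
    by_cases h : i ∈ S
    · rw [dif_pos h, dif_pos h, Ψm_single, map_mul, map_mul, algHom_C']
    · rw [dif_neg h, dif_neg h]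
      exact Ψm_zero k n ψ j

/-! ### the change of variables -/

noncomputable def Amat (g : (Fin n → k) ≃ₗ[k] (Fin n → k)) :
    Matrix (Fin n) (Fin n) k :=
  LinearMap.toMatrix (Pi.basisFun k (Fin n)) (Pi.basisFun k (Fin n))
    (g.symm : (Fin n → k) →ₗ[k] (Fin n → k))

noncomputable def Mmat (g : (Fin n → k) ≃ₗ[k] (Fin n → k)) :
    Matrix (Fin n) (Fin n) k :=
  1 - Amat k n g

noncomputable def Bmat (g : (Fin n → k) ≃ₗ[k] (Fin n → k)) :
    Matrix (Fin n) (Fin n) k :=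
  (Mmat k n g)⁻¹

set_option synthInstance.maxHeartbeats 1000000 in
lemma isUnit_det_Mmat (g : (Fin n → k) ≃ₗ[k] (Fin n → k))
    (hfix : ∀ v : Fin n → k, g v = v → v = 0) :
    IsUnit (Mmat k n g).det := by
  set u : (Fin n → k) →ₗ[k] (Fin n → k) :=
    LinearMap.id - (g.symm : (Fin n → k) →ₗ[k] (Fin n → k)) with hu
  have hker : ∀ v, u v = 0 → v = 0 := by
    intro v hv
    have h1 : v - g.symm v = 0 := hv
    have h2 : g.symm v = v := by
      have := sub_eq_zero.mp h1
      exact this.symm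
    have h3 : g v = v := by
      conv_lhs => rw [← h2]
      exact g.apply_symm_apply v
    exact hfix v h3
  have hinj : Function.Injective u := by
    intro a b hab
    have : u (a - b) = 0 := by rw [map_sub, hab, sub_self]
    have := hker _ this
    exact sub_eq_zero.mp this
  have hsurj : Function.Surjective u :=
    (LinearMap.injective_iff_surjective).mp hinj
  have hMu : Mmat k n g = LinearMap.toMatrix (Pi.basisFun k (Fin n))
      (Pi.basisFun k (Fin n)) u := by
    rw [Mmat, Amat, hu, map_sub, LinearMap.toMatrix_id]
  rw [hMu, LinearMap.det_toMatrix]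
  exact LinearEquiv.isUnit_det' (LinearEquiv.ofBijective u ⟨hinj, hsurj⟩)

lemma MB_eq_one (g : (Fin n → k) ≃ₗ[k] (Fin n → k))
    (hfix : ∀ v : Fin n → k, g v = v → v = 0) :
    Mmat k n g * Bmat k n g = 1 :=
  Matrix.mul_nonsing_inv _ (isUnit_det_Mmat k n g hfix)

lemma BM_eq_one (g : (Fin n → k) ≃ₗ[k] (Fin n → k))
    (hfix : ∀ v : Fin n → k, g v = v → v = 0) :
    Bmat k n g * Mmat k n g = 1 :=
  Matrix.nonsing_inv_mul _ (isUnit_det_Mmat k n g hfix)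

lemma aeval_lin (Mx B : Matrix (Fin n) (Fin n) k) (i : Fin n) :
    aeval (fun j => ∑ l, C (B j l) * X l) (∑ l, C (Mx i l) * X l)
      = ∑ m, (C ((Mx * B) i m) * X m : KRing' k n) := by
  rw [map_sum]
  have h1 : ∀ l, aeval (fun j => ∑ l', C (B j l') * X l') (C (Mx i l) * X l)
      = ∑ m, C (Mx i l) * (C (B l m) * X m) := by
    intro l
    rw [map_mul, aeval_X, aeval_C, MvPolynomial.algebraMap_eq, Finset.mul_sum]
  rw [Finset.sum_congr rfl fun l _ => h1 l, Finset.sum_comm]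
  refine Finset.sum_congr rfl fun m _ => ?_
  simp_rw [← mul_assoc, ← map_mul, ← Finset.sum_mul, ← map_sum]
  rw [Matrix.mul_apply]

lemma sum_C_one_row (i : Fin n) :
    (∑ m, C ((1 : Matrix (Fin n) (Fin n) k) i m) * X m : KRing' k n) = X i := by
  rw [Fintype.sum_eq_single i]
  · rw [Matrix.one_apply_eq, map_one, one_mul]
  · intro m hm
    rw [Matrix.one_apply_ne (Ne.symm hm), map_zero, zero_mul]

lemma sectionPoly_eq (g : (Fin n → k) ≃ₗ[k] (Fin n → k)) (i : Fin n) :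
    sectionPoly k n g i = ∑ l, C (Mmat k n g i l) * X l := by
  have h1 : ∀ l, (C (Mmat k n g i l) * X l : KRing' k n)
      = C ((1 : Matrix (Fin n) (Fin n) k) i l) * X l - C (Amat k n g i l) * X l := by
    intro l
    rw [Mmat, Matrix.sub_apply, map_sub, sub_mul]
  rw [Finset.sum_congr rfl fun l _ => h1 l, Finset.sum_sub_distrib, sum_C_one_row]
  rfl

noncomputable def psiH (g : (Fin n → k) ≃ₗ[k] (Fin n → k)) :
    KRing' k n →ₐ[k] KRing' k n :=
  aeval fun j => ∑ l, C (Bmat k n g j l) * X l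

noncomputable def phiH (g : (Fin n → k) ≃ₗ[k] (Fin n → k)) :
    KRing' k n →ₐ[k] KRing' k n :=
  aeval fun j => ∑ l, C (Mmat k n g j l) * X l

lemma psiH_section (g : (Fin n → k) ≃ₗ[k] (Fin n → k))
    (hfix : ∀ v : Fin n → k, g v = v → v = 0) (i : Fin n) :
    psiH k n g (sectionPoly k n g i) = X i := by
  rw [sectionPoly_eq, psiH, aeval_lin, MB_eq_one k n g hfix, sum_C_one_row]

lemma phiH_X (g : (Fin n → k) ≃ₗ[k] (Fin n → k)) (i : Fin n) :
    phiH k n g (X i) = sectionPoly k n g i := by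
  rw [phiH, aeval_X, sectionPoly_eq]

lemma phiH_psiH (g : (Fin n → k) ≃ₗ[k] (Fin n → k))
    (hfix : ∀ v : Fin n → k, g v = v → v = 0) (p : KRing' k n) :
    phiH k n g (psiH k n g p) = p := by
  induction p using MvPolynomial.induction_on with
  | C a => rw [algHom_C', algHom_C']
  | add p q hp hq => rw [map_add, map_add, hp, hq]
  | mul_X p i hp =>
    rw [map_mul, map_mul, hp]
    congr 1
    rw [psiH, aeval_X, phiH, aeval_lin, BM_eq_one k n g hfix, sum_C_one_row]

lemma psiH_phiH (g : (Fin n → k) ≃ₗ[k] (Fin n → k))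
    (hfix : ∀ v : Fin n → k, g v = v → v = 0) (p : KRing' k n) :
    psiH k n g (phiH k n g p) = p := by
  induction p using MvPolynomial.induction_on with
  | C a => rw [algHom_C', algHom_C']
  | add p q hp hq => rw [map_add, map_add, hp, hq]
  | mul_X p i hp =>
    rw [map_mul, map_mul, hp]
    congr 1
    rw [phiH_X, psiH_section k n g hfix]

lemma eval0_psiH (g : (Fin n → k) ≃ₗ[k] (Fin n → k)) (p : KRing' k n) :
    eval (0 : Fin n → k) (psiH k n g p) = eval (0 : Fin n → k) p := by
  induction p using MvPolynomial.induction_on with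
  | C a => rw [algHom_C']
  | add p q hp hq => rw [map_add, map_add, map_add, hp, hq]
  | mul_X p i hp =>
    have hx : eval (0 : Fin n → k) (psiH k n g (X i)) = 0 := by
      rw [psiH, aeval_X]
      simp
    rw [map_mul, map_mul, hx, map_mul, hp, eval_X]
    simp

lemma intert_psi (g : (Fin n → k) ≃ₗ[k] (Fin n → k))
    (hfix : ∀ v : Fin n → k, g v = v → v = 0) (j : ℕ) (x : KTerm' k n (j + 1)) :
    Ψm k n (psiH k n g) j (kD k n (sectionPoly k n g) j x)
      = kD k n (Xf k n) j (Ψm k n (psiH k n g) (j + 1) x) := by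
  rw [Ψm_kD]
  have h : (fun i => psiH k n g (sectionPoly k n g i)) = Xf k n :=
    funext fun i => by simp only [Xf]; exact psiH_section k n g hfix i
  rw [h]

lemma intert_phi (g : (Fin n → k) ≃ₗ[k] (Fin n → k)) (j : ℕ)
    (x : KTerm' k n (j + 1)) :
    Ψm k n (phiH k n g) j (kD k n (Xf k n) j x)
      = kD k n (sectionPoly k n g) j (Ψm k n (phiH k n g) (j + 1) x) := by
  rw [Ψm_kD]
  have h : (fun i => phiH k n g (Xf k n i)) = sectionPoly k n g :=
    funext fun i => by simp only [Xf]; exact phiH_X k n g i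
  rw [h]

lemma phi_psi_m (g : (Fin n → k) ≃ₗ[k] (Fin n → k))
    (hfix : ∀ v : Fin n → k, g v = v → v = 0) (j : ℕ) (x : KTerm' k n j) :
    Ψm k n (phiH k n g) j (Ψm k n (psiH k n g) j x) = x := by
  ext p
  rw [Ψm, Ψm, Finsupp.mapRange_apply, Finsupp.mapRange_apply,
    phiH_psiH k n g hfix]

lemma aug_single (A : {S : Finset (Fin n) // S.card = 0}) (q : KRing' k n) :
    koszulAug' k n (Finsupp.single A q) = eval (0 : Fin n → k) q := by
  have hA : A = ⟨∅, Finset.card_empty⟩ := Subtype.ext (Finset.card_eq_zero.mp A.2)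
  rw [hA, koszulAug', Finsupp.single_eq_same]

noncomputable def augh : KTerm' k n 0 →+ k :=
  AddMonoidHom.mk' (koszulAug' k n) (aug_add k n)

lemma aug_kD (t : Fin n → KRing' k n)
    (h0 : ∀ i, eval (0 : Fin n → k) (t i) = 0) (w : KTerm' k n 1) :
    koszulAug' k n (kD k n t 0 w) = 0 := by
  induction w using Finsupp.induction with
  | zero =>
    rw [kD_zero, koszulAug']
    simp
  | single_add p r f hp hr ih =>
    rw [kD_add, aug_add, ih, add_zero]
    obtain ⟨S, hS⟩ := p
    rw [kD_single, show koszulAug' k n = ⇑(augh k n) from rfl, map_sum]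
    refine Finset.sum_eq_zero fun i hi => ?_
    show koszulAug' k n (dT k n t S hS r i) = 0
    rw [dT, dif_pos hi, aug_single]
    rw [map_mul, map_mul, h0 i, mul_zero, mul_zero]

lemma eval0_section (g : (Fin n → k) ≃ₗ[k] (Fin n → k)) (i : Fin n) :
    eval (0 : Fin n → k) (sectionPoly k n g i) = 0 := by
  simp [sectionPoly]

/-- If `g` is a linear automorphism of finite order invertible in `k` with
`V^g = 0`, the Koszul complex of `s'(v) = v − g⁻¹(v)` is a resolution of the
one-dimensional module `k` supported at the origin: homology is `k` in degree `0`
and vanishes in positive degrees. -/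
theorem koszul_one_minus_g_resolution (g : (Fin n → k) ≃ₗ[k] (Fin n → k))
    (horder : IsOfFinOrder g) (hinv : ((orderOf g : ℕ) : k) ≠ 0)
    (hfix : ∀ v : Fin n → k, g v = v → v = 0) :
    (Function.Surjective (koszulAug' k n)) ∧
    (Function.Exact (koszulD' k n g 0) (koszulAug' k n)) ∧
    (∀ j : ℕ, Function.Exact (koszulD' k n g (j + 1)) (koszulD' k n g j)) := by
  refine ⟨?_, ?_, ?_⟩
  · intro c
    exact ⟨Finsupp.single ⟨∅, Finset.card_empty⟩ (C c), by
      rw [koszulAug', Finsupp.single_eq_same, eval_C]⟩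
  · rw [koszulD'_eq_kD]
    intro x
    constructor
    · intro hx
      have haugz : koszulAug' k n (Ψm k n (psiH k n g) 0 x) = koszulAug' k n x := by
        rw [Ψm, koszulAug', koszulAug', Finsupp.mapRange_apply, eval0_psiH]
      have h2 := homotopy_zero k n (Ψm k n (psiH k n g) 0 x)
      rw [haugz, hx, map_zero, Finsupp.single_zero, add_zero] at h2
      refine ⟨Ψm k n (phiH k n g) 1 (kH k n 0 (Ψm k n (psiH k n g) 0 x)), ?_⟩
      calc kD k n (sectionPoly k n g) 0
            (Ψm k n (phiH k n g) 1 (kH k n 0 (Ψm k n (psiH k n g) 0 x)))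
          = Ψm k n (phiH k n g) 0
              (kD k n (Xf k n) 0 (kH k n 0 (Ψm k n (psiH k n g) 0 x))) :=
            (intert_phi k n g 0 _).symm
        _ = Ψm k n (phiH k n g) 0 (Ψm k n (psiH k n g) 0 x) := by rw [h2]
        _ = x := phi_psi_m k n g hfix 0 x
    · rintro ⟨w, rfl⟩
      exact aug_kD k n _ (eval0_section k n g) w
  · intro j
    rw [koszulD'_eq_kD, koszulD'_eq_kD]
    intro x
    constructor
    · intro hx
      have hz : kD k n (Xf k n) j (Ψm k n (psiH k n g) (j + 1) x) = 0 := by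
        rw [← intert_psi k n g hfix j x, hx, Ψm_zero]
      have h2 := homotopy_pos k n j (Ψm k n (psiH k n g) (j + 1) x)
      rw [hz, kH_zero, add_zero] at h2
      refine ⟨Ψm k n (phiH k n g) (j + 2)
        (kH k n (j + 1) (Ψm k n (psiH k n g) (j + 1) x)), ?_⟩
      calc kD k n (sectionPoly k n g) (j + 1)
            (Ψm k n (phiH k n g) (j + 2)
              (kH k n (j + 1) (Ψm k n (psiH k n g) (j + 1) x)))
          = Ψm k n (phiH k n g) (j + 1)
              (kD k n (Xf k n) (j + 1)
                (kH k n (j + 1) (Ψm k n (psiH k n g) (j + 1) x))) :=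
            (intert_phi k n g (j + 1) _).symm
        _ = Ψm k n (phiH k n g) (j + 1) (Ψm k n (psiH k n g) (j + 1) x) := by
            rw [h2]
        _ = x := phi_psi_m k n g hfix (j + 1) x
    · rintro ⟨w, rfl⟩
      exact kD_kD k n _ j w
end

section
/- Let G be a group acting on a k-module M, decompose M = ⨁_{O} M_O over conjugacy classes O of G where M = ⨁_{g∈G} M_g with h·M_g ⊆ M_{hgh⁻¹}, and M_O = ⨁_{g∈O} M_g. Fix g ∈ O and let C_g be the centralizer of g. Then M_O is isomorphic as a G-module to the induced module Ind_{C_g}^G M_g, and consequently the coinvariants satisfy (M_O)_G ≅ (M_g)_{C_g}. -/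
set_option maxHeartbeats 1000000

section AuxProj
set_option linter.unusedSectionVars false
variable {k M G : Type*} [CommRing k] [AddCommGroup M] [Module k M] [Group G] [Fintype G]
  [DecidableEq G] [DistribMulAction G M] [SMulCommClass G k M]
variable (Mg : G → Submodule k M)

/-- auxiliary projection onto the `x`-graded piece coming from an internal direct sum. -/
noncomputable def projAux (hdir : DirectSum.IsInternal Mg) (x : G) : M →ₗ[k] Mg x :=
  (DFinsupp.lapply x) ∘ₗ
    (LinearEquiv.ofBijective (DirectSum.coeLinearMap Mg) hdir).symm.toLinearMap

variable {Mg} (hdir : DirectSum.IsInternal Mg)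

lemma projAux_of_mem {m : M} {x : G} (hm : m ∈ Mg x) :
    projAux Mg hdir x m = ⟨m, hm⟩ :=
  hdir.ofBijective_coeLinearMap_of_mem hm

lemma projAux_of_mem_ne {m : M} {x y : G} (hm : m ∈ Mg x) (hxy : x ≠ y) :
    projAux Mg hdir y m = 0 :=
  hdir.ofBijective_coeLinearMap_of_mem_ne hxy hm

lemma sum_coe_eq (d : DirectSum G fun i => Mg i) : ∑ x : G, ((d x : M)) = DirectSum.coeLinearMap Mg d := by
  induction d using DirectSum.induction_on with
  | zero => simp
  | of i a =>
    rw [DirectSum.coeLinearMap_of, Finset.sum_eq_single i]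
    · rw [DirectSum.of_eq_same]
    · intro b _ hb
      rw [DirectSum.of_eq_of_ne _ _ _ hb]; rfl
    · intro h; exact absurd (Finset.mem_univ i) h
  | add a b ha hb =>
    simp only [map_add, DirectSum.add_apply, Submodule.coe_add, Finset.sum_add_distrib, ha, hb]

lemma sum_projAux (m : M) : ∑ x : G, ((projAux Mg hdir x m : M)) = m := by
  obtain ⟨d, rfl⟩ := hdir.surjective m
  show ∑ x : G, ((projAux Mg hdir x (DirectSum.coeLinearMap Mg d) : M)) = DirectSum.coeLinearMap Mg d
  have hd : ∀ x, ((projAux Mg hdir x (DirectSum.coeLinearMap Mg d) : M)) = ((d x : M)) := by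
    intro x
    simp only [projAux, LinearMap.comp_apply]
    erw [LinearEquiv.symm_apply_apply]
    rfl
  rw [Finset.sum_congr rfl (fun x _ => hd x)]
  exact sum_coe_eq d

lemma projAux_smul (hact : ∀ (h g' : G), ∀ m ∈ Mg g', h • m ∈ Mg (h * g' * h⁻¹))
    (h x : G) (m : M) :
    ((projAux Mg hdir (h * x * h⁻¹) (h • m) : M)) = h • ((projAux Mg hdir x m : M)) := by
  conv_lhs => rw [← sum_projAux hdir m, Finset.smul_sum]
  rw [map_sum]
  rw [AddSubmonoidClass.coe_finset_sum]
  rw [Finset.sum_eq_single x]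
  · have := projAux_of_mem hdir (hact h x _ (projAux Mg hdir x m).2)
    rw [this]
  · intro y _ hyx
    have hne : h * y * h⁻¹ ≠ h * x * h⁻¹ := by
      intro he
      apply hyx
      have h2 : h * y = h * x := mul_right_cancel he
      exact mul_left_cancel h2
    rw [projAux_of_mem_ne hdir (hact h y _ (projAux Mg hdir y m).2) hne]
    rfl
  · intro hx; exact absurd (Finset.mem_univ x) hx
end AuxProj
variable (k M G : Type*) [CommRing k] [AddCommGroup M] [Module k M] [Group G] [Fintype G] [DecidableEq G]
  [DistribMulAction G M] [SMulCommClass G k M]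

/-- The summand `M_O = ⨁_{g' ∈ O} M_{g'}` associated to the conjugacy class `O` of `g`. -/
def conjClassPart (Mg : G → Submodule k M) (g : G) : Submodule k M :=
  ⨆ x ∈ {x : G | IsConj g x}, Mg x

/-- The module `Ind_{C_g}^G M_g` induced from the centralizer `C_g` of `g`, realized
(for the finite group `G`) as the `C_g`-equivariant functions `G → M_g`, with `G`
acting by right translation. -/
def inducedFromCentralizer (Mg : G → Submodule k M) (g : G) : Submodule k (G → M) where
  carrier := {f | (∀ x : G, f x ∈ Mg g) ∧
      ∀ c ∈ Subgroup.centralizer ({g} : Set G), ∀ x : G, f (c * x) = c • f x}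
  add_mem' := by
    rintro f₁ f₂ ⟨h₁, h₁'⟩ ⟨h₂, h₂'⟩
    refine ⟨fun x => (Mg g).add_mem (h₁ x) (h₂ x), fun c hc x => ?_⟩
    show f₁ (c * x) + f₂ (c * x) = c • (f₁ x + f₂ x)
    rw [h₁' c hc x, h₂' c hc x, smul_add]
  zero_mem' := ⟨fun _ => (Mg g).zero_mem, fun c _ x => by simp⟩
  smul_mem' := by
    rintro r f ⟨h, h'⟩
    refine ⟨fun x => (Mg g).smul_mem r (h x), fun c hc x => ?_⟩
    show r • f (c * x) = c • (r • f x)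
    rw [h' c hc x]
    exact (smul_comm c r (f x)).symm

/-- The coinvariants `N_H` of a submodule `N ⊆ M` under the elements of a set
`S ⊆ G`: the quotient of `N` by the span of the elements `h • n − n`. -/
abbrev coinvariants (N : Submodule k M) (S : Set G) :=
  N ⧸ Submodule.span k {z : N | ∃ h ∈ S, ∃ n : N, (z : M) = h • (n : M) - (n : M)}

/-- Let `M = ⨁_g M_g` be a `G`-graded module with `h • M_g ⊆ M_{hgh⁻¹}`. For `g ∈ G`
with conjugacy class `O` and centralizer `C_g`, the summand `M_O` is isomorphic as a
`G`-module to `Ind_{C_g}^G M_g` (with `G` acting on the latter by right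
translation), and consequently `(M_O)_G ≅ (M_g)_{C_g}`. -/
theorem conjClassPart_iso_induced (Mg : G → Submodule k M)
    (hdir : DirectSum.IsInternal Mg)
    (hact : ∀ (h g' : G), ∀ m ∈ Mg g', h • m ∈ Mg (h * g' * h⁻¹)) (g : G) :
    (∃ e : conjClassPart k M G Mg g ≃ₗ[k] inducedFromCentralizer k M G Mg g,
      ∀ (h : G) (m m' : conjClassPart k M G Mg g), (m' : M) = h • (m : M) →
        ∀ x : G, (e m' : G → M) x = (e m : G → M) (x * h)) ∧
    Nonempty (coinvariants k M G (conjClassPart k M G Mg g) Set.univ ≃ₗ[k]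
      coinvariants k M G (Mg g) (Subgroup.centralizer ({g} : Set G) : Set G)) := by
  classical
  set C := Subgroup.centralizer ({g} : Set G) with hCdef
  letI : Fintype (G ⧸ C) := Fintype.ofFinite _
  -- basic centralizer fact
  have hCiff : ∀ y : G, y ∈ C ↔ y * g * y⁻¹ = g := by
    intro y
    rw [hCdef, Subgroup.mem_centralizer_singleton_iff]
    constructor
    · intro h; rw [h]; group
    · intro h
      have h2 : y * g * y⁻¹ * y = g * y := by rw [h]
      rwa [inv_mul_cancel_right] at h2
  -- M_x ⊆ M_O for x conjugate to g
  have hconjle : ∀ x : G, IsConj g x → Mg x ≤ conjClassPart k M G Mg g := by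
    intro x hx
    exact le_iSup₂ (f := fun (x : G) (_ : x ∈ {x : G | IsConj g x}) => Mg x) x hx
  -- projections outside the class vanish on M_O
  have hproj0 : ∀ y : G, ¬ IsConj g y → ∀ m : M, m ∈ conjClassPart k M G Mg g →
      projAux Mg hdir y m = 0 := by
    intro y hy
    have hle : conjClassPart k M G Mg g ≤ LinearMap.ker (projAux Mg hdir y) := by
      refine iSup₂_le ?_
      intro x hx m hm
      have hxy : x ≠ y := fun he => hy (he ▸ hx)
      exact projAux_of_mem_ne hdir hm hxy
    intro m hm
    exact hle hm
  -- the underlying linear map of e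
  let e0 : conjClassPart k M G Mg g →ₗ[k] (G → M) :=
    { toFun := fun m => fun x => ((projAux Mg hdir g (x • (m : M)) : M))
      map_add' := by
        intro a b; funext x
        simp [smul_add]
      map_smul' := by
        intro r a; funext x
        show ((projAux Mg hdir g (x • ((r • a : conjClassPart k M G Mg g) : M)) : M))
          = r • ((projAux Mg hdir g (x • (a : M)) : M))
        rw [Submodule.coe_smul, smul_comm x r, map_smul, Submodule.coe_smul] }
  have he0mem : ∀ m, e0 m ∈ inducedFromCentralizer k M G Mg g := by
    intro m
    refine ⟨fun x => (projAux Mg hdir g (x • (m : M))).2, ?_⟩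
    intro c hc x
    show ((projAux Mg hdir g ((c * x) • (m : M)) : M)) = c • ((projAux Mg hdir g (x • (m : M)) : M))
    rw [mul_smul]
    have h1 := projAux_smul hdir hact c g (x • (m : M))
    rw [(hCiff c).1 hc] at h1
    exact h1
  -- injectivity
  have hinj0 : ∀ m : conjClassPart k M G Mg g, e0 m = 0 → m = 0 := by
    intro m hm0
    apply Subtype.ext
    show (m : M) = 0
    rw [← sum_projAux hdir ((m : M))]
    apply Finset.sum_eq_zero
    intro x _
    by_cases hx : IsConj g x
    · obtain ⟨c, hc⟩ := isConj_iff.mp hx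
      have h1 := projAux_smul hdir hact c g (c⁻¹ • (m : M))
      rw [hc, smul_inv_smul] at h1
      have h2 : ((projAux Mg hdir g (c⁻¹ • (m : M)) : M)) = 0 := by
        have h3 := congrFun hm0 c⁻¹
        exact h3
      rw [h1, h2, smul_zero]
    · rw [hproj0 x hx _ m.2]; rfl
  -- surjectivity
  have hsurj0 : ∀ f : G → M, f ∈ inducedFromCentralizer k M G Mg g → ∃ m, e0 m = f := by
    rintro f ⟨hf1, hf2⟩
    set mval : M := ∑ q : G ⧸ C, q.out • f q.out⁻¹ with hmval
    have hmem : mval ∈ conjClassPart k M G Mg g := by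
      apply Submodule.sum_mem
      intro q _
      exact hconjle _ (isConj_iff.mpr ⟨q.out, rfl⟩) (hact q.out g _ (hf1 q.out⁻¹))
    refine ⟨⟨mval, hmem⟩, ?_⟩
    funext x
    show ((projAux Mg hdir g (x • mval) : M)) = f x
    have hx1 : x • mval = ∑ q : G ⧸ C, (x * q.out) • f q.out⁻¹ := by
      rw [hmval, Finset.smul_sum]
      exact Finset.sum_congr rfl fun q _ => (mul_smul x q.out _).symm
    rw [hx1, map_sum, AddSubmonoidClass.coe_finset_sum]
    rw [Finset.sum_eq_single (QuotientGroup.mk x⁻¹ : G ⧸ C)]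
    · set q₀ := (QuotientGroup.mk x⁻¹ : G ⧸ C) with hq₀
      have hc : x * q₀.out ∈ C := by
        have h1 : (QuotientGroup.mk x⁻¹ : G ⧸ C) = QuotientGroup.mk q₀.out :=
          (QuotientGroup.out_eq' q₀).symm
        have h2 := QuotientGroup.eq.mp h1
        rwa [inv_inv] at h2
      set c := x * q₀.out with hcdef2
      have hout : q₀.out⁻¹ = c⁻¹ * x := by rw [hcdef2]; group
      have hterm : (x * q₀.out) • f q₀.out⁻¹ = f x := by
        rw [← hcdef2, hout, ← hf2 c hc (c⁻¹ * x)]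
        congr 1; group
      rw [hterm, projAux_of_mem hdir (hf1 x)]
    · intro q _ hq
      have hmemterm : (x * q.out) • f q.out⁻¹ ∈ Mg ((x * q.out) * g * (x * q.out)⁻¹) :=
        hact _ g _ (hf1 _)
      have hne : (x * q.out) * g * (x * q.out)⁻¹ ≠ g := by
        intro he
        apply hq
        have hcm : x * q.out ∈ C := (hCiff _).mpr he
        rw [← QuotientGroup.out_eq' q]
        apply QuotientGroup.eq.mpr
        have h5 : (x * q.out)⁻¹ ∈ C := inv_mem hcm
        rwa [mul_inv_rev] at h5
      rw [projAux_of_mem_ne hdir hmemterm hne]; rfl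
    · intro h; exact absurd (Finset.mem_univ _) h
  -- the equivalence
  let eL : conjClassPart k M G Mg g →ₗ[k] inducedFromCentralizer k M G Mg g :=
    LinearMap.codRestrict _ e0 he0mem
  have heLbij : Function.Bijective eL := by
    constructor
    · intro a b hab
      have h1 : e0 (a - b) = 0 := by
        rw [map_sub]
        have : e0 a = e0 b := congrArg Subtype.val hab
        rw [this, sub_self]
      have := hinj0 _ h1
      rwa [sub_eq_zero] at this
    · intro f
      obtain ⟨m, hm⟩ := hsurj0 f f.2
      exact ⟨m, Subtype.ext hm⟩
  refine ⟨⟨LinearEquiv.ofBijective eL heLbij, ?_⟩, ?_⟩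
  · intro h m m' hm' x
    show ((projAux Mg hdir g (x • (m' : M)) : M)) = ((projAux Mg hdir g ((x * h) • (m : M)) : M))
    rw [hm', ← mul_smul]
  · -- coinvariants
    set spC := Submodule.span k {z : Mg g | ∃ h ∈ (C : Set G), ∃ n : Mg g,
      (z : M) = h • (n : M) - (n : M)} with hspC
    set spO := Submodule.span k {z : conjClassPart k M G Mg g | ∃ h ∈ (Set.univ : Set G),
      ∃ n : conjClassPart k M G Mg g, (z : M) = h • (n : M) - (n : M)} with hspO
    -- the averaging map Ψ : M → (M_g)_C
    set Ψ : M →ₗ[k] (Mg g ⧸ spC) :=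
      ∑ q : G ⧸ C, (spC.mkQ ∘ₗ projAux Mg hdir g ∘ₗ
        DistribMulAction.toLinearMap k M ((q.out)⁻¹ : G)) with hΨdef
    have hΨapp : ∀ m : M, Ψ m = ∑ q : G ⧸ C, spC.mkQ (projAux Mg hdir g ((q.out)⁻¹ • m)) := by
      intro m
      rw [hΨdef, LinearMap.sum_apply]
      rfl
    have hmkrel : ∀ c ∈ C, ∀ (w v : Mg g), (w : M) = c • (v : M) → spC.mkQ w = spC.mkQ v := by
      intro c hc w v hwv
      rw [Submodule.mkQ_apply, Submodule.mkQ_apply, Submodule.Quotient.eq]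
      apply Submodule.subset_span
      exact ⟨c, hc, v, by rw [Submodule.coe_sub, hwv]⟩
    have hΨsmul : ∀ (h : G) (m : M), Ψ (h • m) = Ψ m := by
      intro h m
      rw [hΨapp, hΨapp]
      have hterm : ∀ q : G ⧸ C,
          spC.mkQ (projAux Mg hdir g ((q.out)⁻¹ • (h • m)))
          = spC.mkQ (projAux Mg hdir g (((h⁻¹ • q).out)⁻¹ • m)) := by
        intro q
        set p := h⁻¹ • q with hp
        have h1 : (QuotientGroup.mk (h⁻¹ * q.out) : G ⧸ C) = QuotientGroup.mk (p.out) :=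
          calc (QuotientGroup.mk (h⁻¹ * q.out) : G ⧸ C)
              = h⁻¹ • (QuotientGroup.mk q.out : G ⧸ C) :=
                (MulAction.Quotient.smul_mk C h⁻¹ q.out).symm
            _ = h⁻¹ • q := by rw [QuotientGroup.out_eq' q]
            _ = p := hp.symm
            _ = QuotientGroup.mk p.out := (QuotientGroup.out_eq' p).symm
        have hcmem : (h⁻¹ * q.out)⁻¹ * p.out ∈ C := QuotientGroup.eq.mp h1
        set c := (h⁻¹ * q.out)⁻¹ * p.out with hc
        have h2 : (q.out)⁻¹ * h = c * (p.out)⁻¹ := by rw [hc]; group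
        have h3 : (q.out)⁻¹ • (h • m) = c • ((p.out)⁻¹ • m) := by
          rw [← mul_smul, ← mul_smul, h2]
        rw [h3]
        apply hmkrel c hcmem
        have h4 := projAux_smul hdir hact c g ((p.out)⁻¹ • m)
        rw [(hCiff c).1 hcmem] at h4
        exact h4
      rw [Finset.sum_congr rfl (fun q _ => hterm q)]
      exact Fintype.sum_bijective (fun q : G ⧸ C => h⁻¹ • q)
        (MulAction.bijective h⁻¹) _ _ (fun q => rfl)
    -- the two maps between coinvariants
    have hαker : spO ≤ LinearMap.ker (Ψ ∘ₗ (conjClassPart k M G Mg g).subtype) := by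
      rw [hspO, Submodule.span_le]
      rintro z ⟨h, -, n, hz⟩
      simp only [SetLike.mem_coe, LinearMap.mem_ker, LinearMap.comp_apply,
        Submodule.subtype_apply]
      rw [hz, map_sub, hΨsmul h ((n : M)), sub_self]
    have hle : Mg g ≤ conjClassPart k M G Mg g := hconjle g (IsConj.refl g)
    have hβker : spC ≤ LinearMap.ker (spO.mkQ ∘ₗ Submodule.inclusion hle) := by
      rw [hspC, Submodule.span_le]
      rintro z ⟨c, hc, n, hz⟩
      simp only [SetLike.mem_coe, LinearMap.mem_ker, LinearMap.comp_apply, Submodule.mkQ_apply]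
      rw [Submodule.Quotient.mk_eq_zero]
      apply Submodule.subset_span
      exact ⟨c, Set.mem_univ c, Submodule.inclusion hle n, hz⟩
    set α : (conjClassPart k M G Mg g ⧸ spO) →ₗ[k] (Mg g ⧸ spC) :=
      spO.liftQ (Ψ ∘ₗ (conjClassPart k M G Mg g).subtype) hαker with hα
    set β : (Mg g ⧸ spC) →ₗ[k] (conjClassPart k M G Mg g ⧸ spO) :=
      spC.liftQ (spO.mkQ ∘ₗ Submodule.inclusion hle) hβker with hβ
    -- α ∘ β = id
    have hαβ : ∀ n : Mg g, α (β (Submodule.Quotient.mk n)) = Submodule.Quotient.mk n := by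
      intro n
      rw [hβ, Submodule.liftQ_apply, LinearMap.comp_apply, Submodule.mkQ_apply, hα,
        Submodule.liftQ_apply]
      show Ψ ((Submodule.inclusion hle n : M)) = Submodule.Quotient.mk n
      have hcoe : ((Submodule.inclusion hle n : conjClassPart k M G Mg g) : M) = (n : M) := rfl
      rw [hcoe, hΨapp]
      rw [Finset.sum_eq_single (QuotientGroup.mk (1 : G) : G ⧸ C)]
      · set q₁ := (QuotientGroup.mk (1 : G) : G ⧸ C) with hq₁
        have hmem1 : (q₁.out)⁻¹ ∈ C := by
          have h1 : QuotientGroup.mk q₁.out = QuotientGroup.mk (1 : G) :=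
            QuotientGroup.out_eq' q₁
          have h2 := QuotientGroup.eq.mp h1
          rwa [mul_one] at h2
        have hmemMg : (q₁.out)⁻¹ • (n : M) ∈ Mg g := by
          have := hact (q₁.out)⁻¹ g _ n.2
          rwa [(hCiff _).1 hmem1] at this
        rw [projAux_of_mem hdir hmemMg]
        exact hmkrel _ hmem1 _ _ rfl
      · intro q _ hq
        have hmemterm : (q.out)⁻¹ • (n : M) ∈ Mg ((q.out)⁻¹ * g * ((q.out)⁻¹)⁻¹) :=
          hact _ g _ n.2
        have hne : (q.out)⁻¹ * g * ((q.out)⁻¹)⁻¹ ≠ g := by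
          intro he
          apply hq
          rw [← QuotientGroup.out_eq' q]
          apply QuotientGroup.eq.mpr
          rw [mul_one]
          exact (hCiff _).mpr he
        rw [projAux_of_mem_ne hdir hmemterm hne, map_zero]
      · intro h; exact absurd (Finset.mem_univ _) h
    -- β ∘ α = id
    have hβα : ∀ m : conjClassPart k M G Mg g,
        β (α (Submodule.Quotient.mk m)) = Submodule.Quotient.mk m := by
      intro m
      rw [hα, Submodule.liftQ_apply]
      show β (Ψ ((m : M))) = Submodule.Quotient.mk m
      rw [hΨapp, map_sum]
      -- each term equals the class of the projection onto the conjugate piece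
      have hconjq : ∀ q : G ⧸ C, IsConj g (q.out * g * (q.out)⁻¹) :=
        fun q => isConj_iff.mpr ⟨q.out, rfl⟩
      set w : (G ⧸ C) → conjClassPart k M G Mg g := fun q =>
        ⟨((projAux Mg hdir (q.out * g * (q.out)⁻¹) ((m : M)) : M)),
          hconjle _ (hconjq q) (projAux Mg hdir (q.out * g * (q.out)⁻¹) ((m : M))).2⟩ with hw
      have hterm : ∀ q : G ⧸ C,
          β (spC.mkQ (projAux Mg hdir g ((q.out)⁻¹ • (m : M))))
            = spO.mkQ (w q) := by
        intro q
        rw [Submodule.mkQ_apply, hβ, Submodule.liftQ_apply, LinearMap.comp_apply,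
          Submodule.mkQ_apply, Submodule.mkQ_apply, Submodule.Quotient.eq]
        apply Submodule.subset_span
        refine ⟨(q.out)⁻¹, Set.mem_univ _, w q, ?_⟩
        rw [Submodule.coe_sub]
        have h4 := projAux_smul hdir hact (q.out)⁻¹ (q.out * g * (q.out)⁻¹) ((m : M))
        have hidx : (q.out)⁻¹ * (q.out * g * (q.out)⁻¹) * ((q.out)⁻¹)⁻¹ = g := by group
        rw [hidx] at h4
        have hcoe1 : ((Submodule.inclusion hle
            (projAux Mg hdir g ((q.out)⁻¹ • (m : M))) : conjClassPart k M G Mg g) : M)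
            = ((projAux Mg hdir g ((q.out)⁻¹ • (m : M)) : M)) := rfl
        rw [hcoe1, h4]
      rw [Finset.sum_congr rfl (fun q _ => hterm q)]
      rw [← map_sum]
      have hinjq : Function.Injective (fun q : G ⧸ C => q.out * g * (q.out)⁻¹) := by
        intro p q hpq
        simp only at hpq
        have h3 : ((q.out)⁻¹ * p.out) * g * ((q.out)⁻¹ * p.out)⁻¹ = g := by
          rw [show ((q.out)⁻¹ * p.out) * g * ((q.out)⁻¹ * p.out)⁻¹
            = (q.out)⁻¹ * (p.out * g * (p.out)⁻¹) * q.out by group, hpq]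
          group
        have h4 : (q.out)⁻¹ * p.out ∈ C := (hCiff _).mpr h3
        have h5 : (QuotientGroup.mk q.out : G ⧸ C) = QuotientGroup.mk p.out :=
          QuotientGroup.eq.mpr h4
        rw [QuotientGroup.out_eq', QuotientGroup.out_eq'] at h5
        exact h5.symm
      have himage : ∀ x ∈ Finset.univ, x ∉ Finset.univ.image
          (fun q : G ⧸ C => q.out * g * (q.out)⁻¹) →
          ((projAux Mg hdir x ((m : M)) : M)) = 0 := by
        intro x _ hx
        by_cases hc : IsConj g x
        · exfalso
          obtain ⟨h, hh⟩ := isConj_iff.mp hc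
          apply hx
          rw [Finset.mem_image]
          refine ⟨QuotientGroup.mk h, Finset.mem_univ _, ?_⟩
          have h1 : QuotientGroup.mk ((QuotientGroup.mk h : G ⧸ C).out) =
              (QuotientGroup.mk h : G ⧸ C) := QuotientGroup.out_eq' _
          have h2 : h⁻¹ * (QuotientGroup.mk h : G ⧸ C).out ∈ C := by
            have h7 := QuotientGroup.eq.mp h1.symm
            exact h7
          set c := h⁻¹ * (QuotientGroup.mk h : G ⧸ C).out with hcdef3
          have hout : (QuotientGroup.mk h : G ⧸ C).out = h * c := by rw [hcdef3]; group
          rw [hout, ← hh]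
          have hcg := (hCiff c).1 h2
          rw [show (h * c) * g * (h * c)⁻¹ = h * (c * g * c⁻¹) * h⁻¹ by group, hcg]
        · rw [hproj0 x hc _ m.2]; rfl
      have hsum : (∑ q : G ⧸ C, w q) = m := by
        apply Subtype.ext
        rw [AddSubmonoidClass.coe_finset_sum]
        calc ∑ q : G ⧸ C, ((w q : M))
            = ∑ q : G ⧸ C, ((projAux Mg hdir
                ((fun q : G ⧸ C => q.out * g * (q.out)⁻¹) q) ((m : M)) : M)) := rfl
          _ = ∑ x ∈ Finset.univ.image (fun q : G ⧸ C => q.out * g * (q.out)⁻¹),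
              ((projAux Mg hdir x ((m : M)) : M)) :=
              (Finset.sum_image (f := fun x => ((projAux Mg hdir x ((m : M)) : M)))
                (g := fun q : G ⧸ C => q.out * g * (q.out)⁻¹) (s := Finset.univ)
                (fun p _ q _ h => hinjq h)).symm
          _ = ∑ x : G, ((projAux Mg hdir x ((m : M)) : M)) :=
              Finset.sum_subset (Finset.subset_univ _) himage
          _ = (m : M) := sum_projAux hdir _
      rw [hsum]
      rfl
    exact ⟨LinearEquiv.ofLinear α β
      (Submodule.linearMap_qext _ (LinearMap.ext fun n => hαβ n))
      (Submodule.linearMap_qext _ (LinearMap.ext fun m => hβα m))⟩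
end
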